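/- Fix ρ_p > 0, h > 0, and a point X_T ∈ ℝ². For each integer n ≥ 2 let R_n = √(n/(π ρ_p)) and let X_1, …, X_n be i.i.d. random points uniformly distributed on the closed disk of radius R_n centered at the origin in ℝ². Define P_1 = 1 if and only if |X_1 − X_T| ≥ h and |X_1 − X_j| ≥ h for every j ≠ 1, and P_1 = 0 otherwise. Then lim_{n→∞} Pr(P_1 = 1) = exp(−π ρ_p h²). -/

import Mathlib

open MeasureTheory ProbabilityTheory Set Real Filter Topology

/-- The uniform probability measure on the closed disk of radius `R` centered at the
origin of the plane. -/
noncomputable def unifDisk (R : ℝ) : Measure (EuclideanSpace ℝ (Fin 2)) :=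
  (volume (Metric.closedBall (0 : EuclideanSpace ℝ (Fin 2)) R))⁻¹ •
    volume.restrict (Metric.closedBall (0 : EuclideanSpace ℝ (Fin 2)) R)

abbrev E2 : Type := EuclideanSpace ℝ (Fin 2)

lemma vol_ball (x : E2) (r : ℝ) (hr : 0 ≤ r) :
    volume (Metric.ball x r) = ENNReal.ofReal (π * r ^ 2) := by
  rw [EuclideanSpace.volume_ball]
  simp only [Fintype.card_fin, Nat.cast_ofNat]
  norm_num
  rw [← ENNReal.ofReal_pow (Real.sqrt_nonneg _), Real.sq_sqrt pi_nonneg, ← ENNReal.ofReal_pow hr,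
    ← ENNReal.ofReal_mul (by positivity)]
  ring_nf

lemma vol_closedBall (x : E2) (r : ℝ) (hr : 0 ≤ r) :
    volume (Metric.closedBall x r) = ENNReal.ofReal (π * r ^ 2) := by
  rw [Measure.addHaar_closedBall_eq_addHaar_ball, vol_ball x r hr]

lemma unifDisk_apply (R : ℝ) (hR : 0 ≤ R) {s : Set E2} (hs : MeasurableSet s) :
    unifDisk R s = (ENNReal.ofReal (π * R ^ 2))⁻¹ * volume (s ∩ Metric.closedBall 0 R) := by
  rw [unifDisk, Measure.smul_apply, Measure.restrict_apply hs, smul_eq_mul,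
    vol_closedBall _ _ hR]

lemma ofReal_div_aux {a b : ℝ} (ha : 0 ≤ a) (hb : 0 < b) :
    (ENNReal.ofReal b)⁻¹ * ENNReal.ofReal a = ENNReal.ofReal (a / b) := by
  rw [ENNReal.ofReal_div_of_pos hb, div_eq_mul_inv, mul_comm]

instance unifDisk_prob (R : ℝ) [Fact (0 < R)] : IsProbabilityMeasure (unifDisk R) := by
  have hR := Fact.out (p := 0 < R)
  constructor
  rw [unifDisk_apply R hR.le MeasurableSet.univ, Set.univ_inter, vol_closedBall _ _ hR.le,
    ENNReal.inv_mul_cancel (by simp [Real.pi_pos, hR, mul_pos]) ENNReal.ofReal_ne_top]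

lemma unifDisk_ball_le (R r : ℝ) (hr : 0 ≤ r) (hR : 0 < R) (y : E2) :
    unifDisk R (Metric.ball y r) ≤ ENNReal.ofReal (r ^ 2 / R ^ 2) := by
  rw [unifDisk_apply R hR.le measurableSet_ball]
  calc (ENNReal.ofReal (π * R ^ 2))⁻¹ * volume (Metric.ball y r ∩ Metric.closedBall 0 R)
      ≤ (ENNReal.ofReal (π * R ^ 2))⁻¹ * volume (Metric.ball y r) := by
        gcongr; exact Set.inter_subset_left
    _ = ENNReal.ofReal (r ^ 2 / R ^ 2) := by
        rw [vol_ball _ _ hr, ofReal_div_aux (by positivity) (by positivity)]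
        congr 1
        field_simp

lemma unifDisk_ball_of_subset (R r : ℝ) (hr : 0 ≤ r) (hR : 0 < R) (y : E2)
    (h : Metric.ball y r ⊆ Metric.closedBall 0 R) :
    unifDisk R (Metric.ball y r) = ENNReal.ofReal (r ^ 2 / R ^ 2) := by
  rw [unifDisk_apply R hR.le measurableSet_ball, Set.inter_eq_left.mpr h,
    vol_ball _ _ hr, ofReal_div_aux (by positivity) (by positivity)]
  congr 1
  field_simp

lemma unifDisk_closedBall (R r : ℝ) (hr : 0 ≤ r) (hrR : r ≤ R) (hR : 0 < R) :
    unifDisk R (Metric.closedBall 0 r) = ENNReal.ofReal (r ^ 2 / R ^ 2) := by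
  rw [unifDisk_apply R hR.le measurableSet_closedBall,
    Set.inter_eq_left.mpr (Metric.closedBall_subset_closedBall hrR),
    vol_closedBall _ _ hr, ofReal_div_aux (by positivity) (by positivity)]
  congr 1
  field_simp


lemma unifDisk_prob' (R : ℝ) (hR : 0 < R) : IsProbabilityMeasure (unifDisk R) := by
  haveI := Fact.mk hR
  infer_instance

lemma prob_rep (h : ℝ) (XT : E2) (μ : Measure E2) [IsProbabilityMeasure μ] (n : ℕ)
    (Ω : Type) [MeasurableSpace Ω] (P : Measure Ω)
    (X : Fin (n + 2) → Ω → E2) (hmeas : ∀ i, Measurable (X i))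
    (hindep : iIndepFun X P)
    (hlaw : ∀ i, P.map (X i) = μ) :
    P {ω | h ≤ dist (X 0 ω) XT ∧ ∀ j : Fin (n + 2), j ≠ 0 → h ≤ dist (X 0 ω) (X j ω)}
      = ∫⁻ y, Set.indicator {y : E2 | h ≤ dist y XT}
          (fun y => (μ {w : E2 | h ≤ dist y w}) ^ (n + 1)) y ∂μ := by
  set S : Set (Fin (n + 2) → E2) :=
    {x | h ≤ dist (x 0) XT ∧ ∀ j : Fin (n + 2), j ≠ 0 → h ≤ dist (x 0) (x j)} with hS
  have msetS : MeasurableSet S := by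
    have hSeq : S = {x : Fin (n + 2) → E2 | h ≤ dist (x 0) XT}
        ∩ ⋂ j : Fin (n + 2), ⋂ (_ : j ≠ 0), {x | h ≤ dist (x 0) (x j)} := by
      ext x; simp [hS]
    rw [hSeq]
    exact (measurableSet_le measurable_const ((measurable_pi_apply 0).dist measurable_const)).inter
      (MeasurableSet.iInter fun j => MeasurableSet.iInter fun _ =>
        measurableSet_le measurable_const ((measurable_pi_apply 0).dist (measurable_pi_apply j)))
  have hX : Measurable (fun ω i => X i ω) := measurable_pi_lambda _ hmeas
  have hjoint : Measure.pi (fun _ : Fin (n + 2) => μ) = P.map (fun ω i => X i ω) := by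
    refine Measure.pi_eq fun s hs => ?_
    rw [Measure.map_apply hX (MeasurableSet.univ_pi hs)]
    have hpre : (fun ω i => X i ω) ⁻¹' (Set.pi univ s) = ⋂ i, X i ⁻¹' s i := by
      ext ω; simp [Set.mem_pi]
    rw [hpre, hindep.meas_iInter (fun i => ⟨s i, hs i, rfl⟩)]
    exact Finset.prod_congr rfl fun i _ => by
      rw [← hlaw i, Measure.map_apply (hmeas i) (hs i)]
  have hev : {ω | h ≤ dist (X 0 ω) XT ∧ ∀ j : Fin (n + 2), j ≠ 0 →
      h ≤ dist (X 0 ω) (X j ω)} = (fun ω i => X i ω) ⁻¹' S := rfl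
  rw [hev, ← Measure.map_apply hX msetS, ← hjoint]
  -- now compute the pi measure of S
  set T : Set (E2 × (Fin (n + 1) → E2)) :=
    {p | h ≤ dist p.1 XT ∧ ∀ k : Fin (n + 1), h ≤ dist p.1 (p.2 k)} with hT
  have hTmeas : MeasurableSet T := by
    have hTeq : T = {p : E2 × (Fin (n + 1) → E2) | h ≤ dist p.1 XT}
        ∩ ⋂ k : Fin (n + 1), {p | h ≤ dist p.1 (p.2 k)} := by ext p; simp [hT]
    rw [hTeq]
    exact (measurableSet_le measurable_const (measurable_fst.dist measurable_const)).inter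
      (MeasurableSet.iInter fun k =>
        measurableSet_le measurable_const
          (measurable_fst.dist ((measurable_pi_apply k).comp measurable_snd)))
  have mp := measurePreserving_piFinSuccAbove (fun _ : Fin (n + 2) => μ) 0
  have hpreS : (MeasurableEquiv.piFinSuccAbove (fun _ : Fin (n + 2) => E2) 0).symm ⁻¹' S
      = T := by
    ext ⟨y, z⟩
    have e0 : (MeasurableEquiv.piFinSuccAbove (fun _ : Fin (n + 2) => E2) 0).symm (y, z)
        = Fin.insertNth 0 y z := rfl
    simp only [Set.mem_preimage, e0, hS, hT, Set.mem_setOf_eq, Fin.insertNth_apply_same]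
    constructor
    · rintro ⟨h1, h2⟩
      refine ⟨h1, fun k => ?_⟩
      have := h2 (Fin.succAbove 0 k) (Fin.succAbove_ne 0 k)
      rwa [Fin.insertNth_apply_succAbove] at this
    · rintro ⟨h1, h2⟩
      refine ⟨h1, fun j hj => ?_⟩
      obtain ⟨k, rfl⟩ := Fin.exists_succAbove_eq hj
      rw [Fin.insertNth_apply_succAbove]
      exact h2 k
  have key : Measure.pi (fun _ : Fin (n + 2) => μ) S
      = (μ.prod (Measure.pi fun _ : Fin (n + 1) => μ)) T := by
    rw [← hpreS]
    exact ((MeasurePreserving.symm _ mp).measure_preimage msetS.nullMeasurableSet).symm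
  rw [key, Measure.prod_apply hTmeas]
  refine lintegral_congr fun y => ?_
  by_cases hy : h ≤ dist y XT
  · have : Prod.mk y ⁻¹' T = Set.pi univ (fun _ : Fin (n + 1) => {w : E2 | h ≤ dist y w}) := by
      ext z; simp [hT, hy, Set.mem_pi]
    rw [this, Measure.pi_pi, Finset.prod_const, Finset.card_univ, Fintype.card_fin,
      Set.indicator_of_mem (show y ∈ {y : E2 | h ≤ dist y XT} from hy)]
  · have : Prod.mk y ⁻¹' T = (∅ : Set (Fin (n + 1) → E2)) := by
      ext z; simp [hT, hy]
    rw [this, measure_empty, Set.indicator_of_notMem (show y ∉ {y : E2 | h ≤ dist y XT} from hy)]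

lemma per_n (h c Rn : ℝ) (XT : E2) (hh : 0 < h) (hRh : h ≤ Rn) (n : ℕ)
    (hfrac : h ^ 2 / Rn ^ 2 = c / (n + 2)) (hc1 : c / (n + 2) ≤ 1) (hc0 : 0 ≤ c) :
    |(∫⁻ y, Set.indicator {y : E2 | h ≤ dist y XT}
        (fun y => (unifDisk Rn {w : E2 | h ≤ dist y w}) ^ (n + 1)) y ∂(unifDisk Rn)).toReal
      - (1 - c / (n + 2)) ^ (n + 1)|
      ≤ (1 - (Rn - h) ^ 2 / Rn ^ 2) + h ^ 2 / Rn ^ 2 := by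
  have hRn : 0 < Rn := hh.trans_le hRh
  haveI : IsProbabilityMeasure (unifDisk Rn) := unifDisk_prob' Rn hRn
  set μ := unifDisk Rn with hμ
  set T0 : Set E2 := {y : E2 | h ≤ dist y XT} with hT0
  set A : Set E2 := Metric.closedBall (0 : E2) (Rn - h) ∩ T0 with hA
  have hT0m : MeasurableSet T0 :=
    measurableSet_le measurable_const (measurable_id.dist measurable_const)
  have hAm : MeasurableSet A := measurableSet_closedBall.inter hT0m
  set t : ENNReal := ENNReal.ofReal (c / (n + 2)) with ht
  set κ : ENNReal := (1 - t) ^ (n + 1) with hκ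
  set Q : E2 → ENNReal := fun y => μ {w : E2 | h ≤ dist y w} with hQdef
  have hQ : ∀ y ∈ Metric.closedBall (0 : E2) (Rn - h), Q y = 1 - t := by
    intro y hy
    have hyd : dist y 0 ≤ Rn - h := Metric.mem_closedBall.mp hy
    have hsub : Metric.ball y h ⊆ Metric.closedBall (0 : E2) Rn := by
      intro w hw
      rw [Metric.mem_ball] at hw
      rw [Metric.mem_closedBall]
      have := dist_triangle w y 0
      linarith
    have hset : {w : E2 | h ≤ dist y w} = (Metric.ball y h)ᶜ := by
      ext w; simp [Metric.mem_ball, dist_comm, not_lt]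
    show μ {w : E2 | h ≤ dist y w} = 1 - t
    rw [hset, measure_compl Metric.isOpen_ball.measurableSet (measure_ne_top _ _),
      measure_univ, hμ, unifDisk_ball_of_subset Rn h hh.le hRn y hsub, hfrac]
  have hQ1 : ∀ y : E2, Q y ≤ 1 := fun y => prob_le_one
  set f : E2 → ENNReal := fun y => Set.indicator T0 (fun y => Q y ^ (n + 1)) y with hf
  have hlow : ∀ y : E2, Set.indicator A (fun _ => κ) y ≤ f y := by
    intro y
    by_cases hyA : y ∈ A
    · rw [Set.indicator_of_mem hyA]
      show κ ≤ Set.indicator T0 (fun y => Q y ^ (n + 1)) y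
      rw [Set.indicator_of_mem hyA.2, hQ y hyA.1]
    · rw [Set.indicator_of_notMem hyA]; exact zero_le
  have hup : ∀ y : E2, f y ≤ Set.indicator A (fun _ => κ) y + Set.indicator Aᶜ (fun _ => 1) y := by
    intro y
    show Set.indicator T0 (fun y => Q y ^ (n + 1)) y ≤ _
    by_cases hyA : y ∈ A
    · rw [Set.indicator_of_mem hyA, Set.indicator_of_mem hyA.2, hQ y hyA.1]
      exact le_add_right le_rfl
    · rw [Set.indicator_of_notMem hyA, Set.indicator_of_mem (Set.mem_compl hyA), zero_add]
      by_cases hyT : y ∈ T0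
      · rw [Set.indicator_of_mem hyT]
        exact pow_le_one' (hQ1 y) _
      · rw [Set.indicator_of_notMem hyT]; exact zero_le_one
  have hlowI : κ * μ A ≤ ∫⁻ y, f y ∂μ := by
    rw [← lintegral_indicator_const hAm κ]
    exact lintegral_mono hlow
  have hupI : ∫⁻ y, f y ∂μ ≤ κ * μ A + μ Aᶜ := by
    calc ∫⁻ y, f y ∂μ
        ≤ ∫⁻ y, (Set.indicator A (fun _ => κ) y + Set.indicator Aᶜ (fun _ => 1) y) ∂μ :=
          lintegral_mono hup
      _ = κ * μ A + μ Aᶜ := by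
          rw [lintegral_add_left (measurable_const.indicator hAm),
            lintegral_indicator_const hAm, lintegral_indicator_const hAm.compl, one_mul]
  set e : ℝ := (1 - (Rn - h) ^ 2 / Rn ^ 2) + h ^ 2 / Rn ^ 2 with he
  have hsq : (Rn - h) ^ 2 / Rn ^ 2 ≤ 1 := by
    rw [div_le_one (by positivity)]
    nlinarith
  have he0 : 0 ≤ e := by
    have : 0 ≤ h ^ 2 / Rn ^ 2 := by positivity
    rw [he]; linarith
  have hcompl : μ Aᶜ ≤ ENNReal.ofReal e := by
    rw [hA, Set.compl_inter]
    refine (measure_union_le _ _).trans ?_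
    have h1 : μ (Metric.closedBall (0 : E2) (Rn - h))ᶜ
        ≤ ENNReal.ofReal (1 - (Rn - h) ^ 2 / Rn ^ 2) := by
      rw [measure_compl measurableSet_closedBall (measure_ne_top _ _), measure_univ, hμ,
        unifDisk_closedBall Rn (Rn - h) (by linarith) (by linarith) hRn,
        ← ENNReal.ofReal_one, ← ENNReal.ofReal_sub _ (by positivity)]
    have h2 : μ T0ᶜ ≤ ENNReal.ofReal (h ^ 2 / Rn ^ 2) := by
      have hT0c : T0ᶜ = Metric.ball XT h := by
        ext y; simp [hT0, Metric.mem_ball, not_le]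
      rw [hT0c, hμ]
      exact unifDisk_ball_le Rn h hh.le hRn XT
    rw [he, ENNReal.ofReal_add (by linarith) (by positivity)]
    exact add_le_add h1 h2
  have hκ1 : κ ≤ 1 := pow_le_one' tsub_le_self _
  have hupfin : κ * μ A + μ Aᶜ ≠ ⊤ :=
    (ENNReal.add_lt_top.mpr ⟨(mul_le_one' hκ1 prob_le_one).trans_lt ENNReal.one_lt_top,
      (prob_le_one).trans_lt ENNReal.one_lt_top⟩).ne
  have hfin : ∫⁻ y, f y ∂μ ≠ ⊤ := (hupI.trans_lt (lt_top_iff_ne_top.mpr hupfin)).ne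
  set F : ℝ := (∫⁻ y, f y ∂μ).toReal with hF
  set a : ℝ := (μ A).toReal with ha
  set d : ℝ := (μ Aᶜ).toReal with hd
  set b : ℝ := (1 - c / (n + 2)) ^ (n + 1) with hb
  have hb0' : (0:ℝ) ≤ 1 - c / (n + 2) := by linarith
  have hκtoReal : κ.toReal = b := by
    rw [hκ, ENNReal.toReal_pow, hb]
    congr 1
    rw [ht, ← ENNReal.ofReal_one, ← ENNReal.ofReal_sub _ (by positivity),
      ENNReal.toReal_ofReal hb0']
  have ha1 : a ≤ 1 := by
    have := ENNReal.toReal_mono ENNReal.one_ne_top (prob_le_one (μ := μ) (s := A))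
    simpa using this
  have ha0 : 0 ≤ a := ENNReal.toReal_nonneg
  have hd0 : 0 ≤ d := ENNReal.toReal_nonneg
  have hda : d = 1 - a := by
    rw [hd, measure_compl hAm (measure_ne_top _ _), measure_univ,
      ENNReal.toReal_sub_of_le prob_le_one ENNReal.one_ne_top, ENNReal.toReal_one, ha]
  have hd_le : d ≤ e := by
    have := ENNReal.toReal_mono ENNReal.ofReal_ne_top hcompl
    rwa [ENNReal.toReal_ofReal he0] at this
  have hFlow : b * a ≤ F := by
    have := ENNReal.toReal_mono hfin hlowI
    rwa [ENNReal.toReal_mul, hκtoReal] at this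
  have hFup : F ≤ b * a + d := by
    have := ENNReal.toReal_mono hupfin hupI
    rwa [ENNReal.toReal_add
        (ENNReal.mul_ne_top (hκ1.trans_lt ENNReal.one_lt_top).ne (measure_ne_top _ _))
        (measure_ne_top _ _),
      ENNReal.toReal_mul, hκtoReal] at this
  have hb0 : 0 ≤ b := pow_nonneg hb0' _
  have hcN0 : (0:ℝ) ≤ c / (n + 2) := by positivity
  have hb1 : b ≤ 1 := pow_le_one₀ hb0' (by linarith)
  rw [abs_le]
  constructor <;> nlinarith

lemma pow_lim (c : ℝ) :
    Tendsto (fun n : ℕ => (1 - c / ((n : ℝ) + 2)) ^ (n + 1)) atTop (𝓝 (Real.exp (-c))) := by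
  have h1 : Tendsto (fun n : ℕ => (1 + (-c) / ((n : ℝ) + 2)) ^ (n + 2)) atTop
      (𝓝 (Real.exp (-c))) := by
    have h := (Real.tendsto_one_add_div_pow_exp (-c)).comp (tendsto_add_atTop_nat 2)
    refine h.congr fun n => ?_
    simp only [Function.comp_apply]
    push_cast
    ring_nf
  have h0 : Tendsto (fun n : ℕ => (-c) / ((n : ℝ) + 2)) atTop (𝓝 0) := by
    have := (tendsto_const_div_atTop_nhds_zero_nat (-c)).comp (tendsto_add_atTop_nat 2)
    refine this.congr fun n => ?_
    simp only [Function.comp_apply]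
    push_cast
    ring
  have hbase : Tendsto (fun n : ℕ => 1 + (-c) / ((n : ℝ) + 2)) atTop (𝓝 1) := by
    simpa using tendsto_const_nhds.add h0
  have hdiv := h1.div hbase one_ne_zero
  rw [div_one] at hdiv
  refine hdiv.congr' ?_
  filter_upwards [hbase.eventually_ne one_ne_zero] with n hn
  have hx : (1 : ℝ) + -c / (↑n + 2) = 1 - c / (↑n + 2) := by ring
  simp only [Pi.div_apply]
  rw [pow_succ, mul_div_assoc, div_self hn, mul_one, hx, pow_succ]


theorem stmt8 (ρp h : ℝ) (hρp : 0 < ρp) (hh : 0 < h)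
    (XT : EuclideanSpace ℝ (Fin 2))
    (R : ℕ → ℝ) (hR : ∀ n : ℕ, R n = Real.sqrt (n / (π * ρp)))
    (Ω : ℕ → Type) [∀ n, MeasurableSpace (Ω n)]
    (P : (n : ℕ) → Measure (Ω n)) (hprob : ∀ n, IsProbabilityMeasure (P n))
    (X : (n : ℕ) → Fin n → Ω n → EuclideanSpace ℝ (Fin 2))
    (hmeas : ∀ n i, Measurable (X n i))
    (hindep : ∀ n, iIndepFun (X n) (P n))
    (hlaw : ∀ n (i : Fin n), (P n).map (X n i) = unifDisk (R n)) :
    Tendsto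
      (fun n : ℕ =>
        ((P (n + 2)) {ω | h ≤ dist (X (n + 2) 0 ω) XT ∧
          ∀ j : Fin (n + 2), j ≠ 0 → h ≤ dist (X (n + 2) 0 ω) (X (n + 2) j ω)}).toReal)
      atTop (nhds (Real.exp (-(π * ρp * h ^ 2)))) := by
  set c : ℝ := π * ρp * h ^ 2 with hc
  have hπρ : 0 < π * ρp := mul_pos pi_pos hρp
  have hc0 : 0 < c := by positivity
  have hRpos : ∀ n : ℕ, 0 < R (n + 2) := fun n => by
    rw [hR]
    apply Real.sqrt_pos.mpr
    positivity
  have hfrac : ∀ n : ℕ, h ^ 2 / (R (n + 2)) ^ 2 = c / ((n : ℝ) + 2) := by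
    intro n
    rw [hR, Real.sq_sqrt (by positivity)]
    push_cast
    rw [hc]
    field_simp
  have hcN : Tendsto (fun n : ℕ => c / ((n : ℝ) + 2)) atTop (𝓝 0) := by
    have := (tendsto_const_div_atTop_nhds_zero_nat c).comp (tendsto_add_atTop_nat 2)
    refine this.congr fun n => ?_
    simp only [Function.comp_apply]
    push_cast
    ring
  -- rewrite the probability using prob_rep
  have hrep : ∀ n : ℕ,
      ((P (n + 2)) {ω | h ≤ dist (X (n + 2) 0 ω) XT ∧
        ∀ j : Fin (n + 2), j ≠ 0 → h ≤ dist (X (n + 2) 0 ω) (X (n + 2) j ω)})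
      = ∫⁻ y, Set.indicator {y : E2 | h ≤ dist y XT}
          (fun y => (unifDisk (R (n + 2)) {w : E2 | h ≤ dist y w}) ^ (n + 1)) y
          ∂(unifDisk (R (n + 2))) := by
    intro n
    haveI := unifDisk_prob' (R (n + 2)) (hRpos n)
    exact prob_rep h XT (unifDisk (R (n + 2))) n (Ω (n + 2)) (P (n + 2)) (X (n + 2))
      (hmeas (n + 2)) (hindep (n + 2)) (hlaw (n + 2))
  simp only [hrep]
  -- define the sequences
  set G : ℕ → ℝ := fun n =>
    (∫⁻ y, Set.indicator {y : E2 | h ≤ dist y XT}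
      (fun y => (unifDisk (R (n + 2)) {w : E2 | h ≤ dist y w}) ^ (n + 1)) y
      ∂(unifDisk (R (n + 2)))).toReal with hG
  set b : ℕ → ℝ := fun n => (1 - c / ((n : ℝ) + 2)) ^ (n + 1) with hb
  have hblim : Tendsto b atTop (𝓝 (Real.exp (-c))) := pow_lim c
  have hslim : Tendsto (fun n : ℕ => 2 * Real.sqrt (c / ((n : ℝ) + 2))) atTop (𝓝 0) := by
    have hs : Tendsto (fun n : ℕ => Real.sqrt (c / ((n : ℝ) + 2))) atTop (𝓝 0) := by
      have := (Real.continuous_sqrt.tendsto 0).comp hcN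
      simpa using (by exact this : Tendsto (fun n : ℕ => Real.sqrt (c / ((n : ℝ) + 2))) atTop (𝓝 (Real.sqrt 0)))
    simpa using hs.const_mul 2
  have hev : ∀ᶠ n : ℕ in atTop, |G n - b n| ≤ 2 * Real.sqrt (c / ((n : ℝ) + 2)) := by
    filter_upwards [hcN.eventually (gt_mem_nhds one_pos)] with n hn
    have hRn := hRpos n
    have hfr := hfrac n
    have hh2 : h ^ 2 ≤ (R (n + 2)) ^ 2 := by
      have : h ^ 2 / (R (n + 2)) ^ 2 ≤ 1 := by rw [hfr]; exact hn.le
      rwa [div_le_one (by positivity)] at this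
    have hhR : h ≤ R (n + 2) := by nlinarith
    have hbound := per_n h c (R (n + 2)) XT hh hhR n hfr hn.le hc0.le
    have heq : (1 - (R (n + 2) - h) ^ 2 / (R (n + 2)) ^ 2) + h ^ 2 / (R (n + 2)) ^ 2
        = 2 * (h / R (n + 2)) := by
      field_simp
      ring
    have hsq : h / R (n + 2) = Real.sqrt (c / ((n : ℝ) + 2)) := by
      rw [← hfr, ← Real.sqrt_sq (le_of_lt (div_pos hh hRn)), div_pow]
    calc |G n - b n| ≤ (1 - (R (n + 2) - h) ^ 2 / (R (n + 2)) ^ 2) + h ^ 2 / (R (n + 2)) ^ 2 :=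
          hbound
      _ = 2 * Real.sqrt (c / ((n : ℝ) + 2)) := by rw [heq, hsq]
  have hdiff : Tendsto (fun n => G n - b n) atTop (𝓝 0) :=
    squeeze_zero_norm' hev hslim
  have := hdiff.add hblim
  rw [zero_add] at this
  refine this.congr fun n => ?_
  ring
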